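/- Let A and B be 0,1 matrices. Then the Boolean rank of the Kronecker product A⊗B satisfies: Rbool(A⊗B) ≤ Rbool(A)·Rbool(B), and Rbool(A⊗B) ≥ max{i(A)·Rbool(B), Rbool(A)·i(B)}, where i(·) denotes the maximum size of an isolation set. -/

import Mathlib

open Function Set

section Defs

variable {α β : Type*}

/-- A `0,1` matrix with integer entries. -/
def ZeroOne (M : Matrix α β ℤ) : Prop := ∀ i j, M i j = 0 ∨ M i j = 1

/-- A monochromatic all-ones combinatorial rectangle of `M`. -/
def IsOnesRect (M : Matrix α β ℤ) (S : Set (α × β)) : Prop :=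
  (∃ (R : Set α) (C : Set β), S = R ×ˢ C) ∧ ∀ p ∈ S, M p.1 p.2 = 1

/-- The set of `1`-entries of `M`. -/
def onesOf (M : Matrix α β ℤ) : Set (α × β) := {p | M p.1 p.2 = 1}

/-- Minimum number of monochromatic all-ones rectangles covering the ones of `M`. -/
noncomputable def coverNum (M : Matrix α β ℤ) : ℕ :=
  sInf {k | ∃ f : Fin k → Set (α × β), (∀ t, IsOnesRect M (f t)) ∧ (⋃ t, f t) = onesOf M}

/-- Minimum number of pairwise disjoint monochromatic all-ones rectangles
partitioning the ones of `M`. -/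
noncomputable def partitionNum (M : Matrix α β ℤ) : ℕ :=
  sInf {k | ∃ f : Fin k → Set (α × β), (∀ t, IsOnesRect M (f t)) ∧
    (Pairwise fun s t => Disjoint (f s) (f t)) ∧ (⋃ t, f t) = onesOf M}

end Defs

/-- An isolation set in a `0,1` matrix `M`: a set of `1`-entries, no two sharing a
row or a column, and no two lying in a common all-ones `2 × 2` submatrix. -/
def IsIsolationSet {α β : Type*} (M : Matrix α β ℤ) (F : Set (α × β)) : Prop :=
  (∀ p ∈ F, M p.1 p.2 = 1) ∧
  ∀ p ∈ F, ∀ q ∈ F, p ≠ q →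
    p.1 ≠ q.1 ∧ p.2 ≠ q.2 ∧ ¬(M p.1 q.2 = 1 ∧ M q.1 p.2 = 1)

/-- The maximum size of an isolation set of `M`. -/
noncomputable def isolNum {α β : Type*} (M : Matrix α β ℤ) : ℕ :=
  sSup {k | ∃ F : Finset (α × β), IsIsolationSet M ↑F ∧ F.card = k}

section Aux

open Kronecker

lemma zo_mul_eq_one {a b : ℤ} (ha : a = 0 ∨ a = 1) (h : a * b = 1) : a = 1 ∧ b = 1 := by
  rcases ha with h0 | h1
  · simp [h0] at h
  · refine ⟨h1, ?_⟩; rwa [h1, one_mul] at h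

lemma coverSet_nonempty {α β : Type*} [Fintype α] [Fintype β] (M : Matrix α β ℤ) :
    {k | ∃ f : Fin k → Set (α × β),
      (∀ t, IsOnesRect M (f t)) ∧ (⋃ t, f t) = onesOf M}.Nonempty := by
  classical
  set e := (Fintype.equivFin (α × β)) with he
  refine ⟨Fintype.card (α × β), fun t =>
    if M (e.symm t).1 (e.symm t).2 = 1 then {e.symm t} else ∅, fun t => ?_, ?_⟩
  · dsimp only
    by_cases h : M (e.symm t).1 (e.symm t).2 = 1
    · rw [if_pos h]
      exact ⟨⟨{(e.symm t).1}, {(e.symm t).2}, by rw [Set.singleton_prod_singleton]⟩,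
        by rintro p rfl; exact h⟩
    · rw [if_neg h]
      exact ⟨⟨∅, ∅, by rw [Set.empty_prod]⟩, by rintro p hp; exact absurd hp (Set.notMem_empty p)⟩
  · ext pr
    simp only [Set.mem_iUnion, onesOf, Set.mem_setOf_eq]
    constructor
    · rintro ⟨t, ht⟩
      by_cases h : M (e.symm t).1 (e.symm t).2 = 1
      · rw [if_pos h] at ht
        rw [Set.mem_singleton_iff] at ht
        rw [ht]; exact h
      · rw [if_neg h] at ht
        exact absurd ht (Set.notMem_empty pr)
    · intro h
      refine ⟨e pr, ?_⟩
      rw [if_pos (by simpa using h)]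
      simp

lemma coverNum_exists {α β : Type*} [Fintype α] [Fintype β] (M : Matrix α β ℤ) :
    ∃ f : Fin (coverNum M) → Set (α × β),
      (∀ t, IsOnesRect M (f t)) ∧ (⋃ t, f t) = onesOf M :=
  Nat.sInf_mem (coverSet_nonempty M)

lemma coverNum_le {α β : Type*} {M : Matrix α β ℤ} {k : ℕ}
    (f : Fin k → Set (α × β)) (h1 : ∀ t, IsOnesRect M (f t))
    (h2 : (⋃ t, f t) = onesOf M) : coverNum M ≤ k :=
  Nat.sInf_le ⟨f, h1, h2⟩

lemma isolNum_exists {α β : Type*} [Fintype α] [Fintype β] (M : Matrix α β ℤ) :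
    ∃ F : Finset (α × β), IsIsolationSet M ↑F ∧ F.card = isolNum M := by
  classical
  have hne : {k | ∃ F : Finset (α × β), IsIsolationSet M ↑F ∧ F.card = k}.Nonempty :=
    ⟨0, ∅, ⟨by simp, by simp⟩, by simp⟩
  have hbdd : BddAbove {k | ∃ F : Finset (α × β), IsIsolationSet M ↑F ∧ F.card = k} := by
    refine ⟨Fintype.card (α × β), ?_⟩
    rintro k ⟨F, -, rfl⟩
    exact Finset.card_le_univ F
  obtain ⟨F, hF, hc⟩ := Nat.sSup_mem hne hbdd
  exact ⟨F, hF, hc⟩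

lemma key_lower {n m p q : ℕ} (A : Matrix (Fin n) (Fin m) ℤ) (B : Matrix (Fin p) (Fin q) ℤ)
    (hA : ZeroOne A) (hB : ZeroOne B) :
    isolNum A * coverNum B ≤ coverNum (A ⊗ₖ B) := by
  classical
  set r := coverNum (A ⊗ₖ B) with hr
  obtain ⟨f, hrect, hcov⟩ := coverNum_exists (A ⊗ₖ B)
  obtain ⟨F, hFiso, hFcard⟩ := isolNum_exists A
  -- the rectangles meeting the (i,j)-copy of B
  set T : (Fin n × Fin m) → Finset (Fin r) := fun pr =>
    Finset.univ.filter (fun t => ∃ pq : Fin p × Fin q, ((pr.1, pq.1), (pr.2, pq.2)) ∈ f t)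
    with hT
  have claim2 : ∀ pr ∈ F, coverNum B ≤ (T pr).card := by
    intro pr hpr
    have h1 : A pr.1 pr.2 = 1 := hFiso.1 pr hpr
    set e := (T pr).equivFin.symm with he
    refine coverNum_le (M := B)
      (fun s => {pq : Fin p × Fin q | ((pr.1, pq.1), (pr.2, pq.2)) ∈ f (e s : Fin r)}) ?_ ?_
    · intro s
      obtain ⟨⟨R, C, hRC⟩, hones⟩ := hrect (e s : Fin r)
      constructor
      · refine ⟨{p' | (pr.1, p') ∈ R}, {q' | (pr.2, q') ∈ C}, ?_⟩
        ext pq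
        simp [hRC, Set.mem_prod]
      · intro pq hpq
        have := hones _ hpq
        simp only [Matrix.kroneckerMap_apply] at this
        exact (zo_mul_eq_one (hA _ _) this).2
    · ext pq
      simp only [Set.mem_iUnion, onesOf, Set.mem_setOf_eq]
      constructor
      · rintro ⟨s, hs⟩
        have : ((pr.1, pq.1), (pr.2, pq.2)) ∈ ⋃ t, f t := Set.mem_iUnion.2 ⟨_, hs⟩
        rw [hcov] at this
        simp only [onesOf, Set.mem_setOf_eq, Matrix.kroneckerMap_apply] at this
        exact (zo_mul_eq_one (hA _ _) this).2
      · intro hpq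
        have hone : ((pr.1, pq.1), (pr.2, pq.2)) ∈ onesOf (A ⊗ₖ B) := by
          simp only [onesOf, Set.mem_setOf_eq, Matrix.kroneckerMap_apply, h1, hpq, mul_one]
        rw [← hcov] at hone
        obtain ⟨t, ht⟩ := Set.mem_iUnion.1 hone
        have htT : t ∈ T pr := by
          simp only [hT, Finset.mem_filter, Finset.mem_univ, true_and]
          exact ⟨pq, ht⟩
        refine ⟨e.symm ⟨t, htT⟩, ?_⟩
        simpa [Set.mem_setOf_eq, Equiv.apply_symm_apply] using ht
  have claim1 : ∀ pr ∈ F, ∀ pr' ∈ F, pr ≠ pr' → Disjoint (T pr) (T pr') := by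
    intro pr hpr pr' hpr' hne
    rw [Finset.disjoint_left]
    intro t ht ht'
    simp only [hT, Finset.mem_filter, Finset.mem_univ, true_and] at ht ht'
    obtain ⟨pq, hpq⟩ := ht
    obtain ⟨pq', hpq'⟩ := ht'
    obtain ⟨⟨R, C, hRC⟩, hones⟩ := hrect t
    rw [hRC] at hpq hpq'
    have hx : ((pr.1, pq.1), (pr'.2, pq'.2)) ∈ R ×ˢ C := ⟨hpq.1, hpq'.2⟩
    have hy : ((pr'.1, pq'.1), (pr.2, pq.2)) ∈ R ×ˢ C := ⟨hpq'.1, hpq.2⟩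
    have h1 := hones _ (hRC ▸ hx)
    have h2 := hones _ (hRC ▸ hy)
    simp only [Matrix.kroneckerMap_apply] at h1 h2
    exact (hFiso.2 pr hpr pr' hpr' hne).2.2
      ⟨(zo_mul_eq_one (hA _ _) h1).1, (zo_mul_eq_one (hA _ _) h2).1⟩
  calc isolNum A * coverNum B = F.card * coverNum B := by rw [hFcard]
    _ = ∑ _pr ∈ F, coverNum B := by rw [Finset.sum_const, smul_eq_mul]
    _ ≤ ∑ pr ∈ F, (T pr).card := Finset.sum_le_sum claim2
    _ = (F.biUnion T).card := (Finset.card_biUnion claim1).symm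
    _ ≤ (Finset.univ : Finset (Fin r)).card := Finset.card_le_univ _
    _ = r := Finset.card_fin r

lemma upper_bound {n m p q : ℕ} (A : Matrix (Fin n) (Fin m) ℤ) (B : Matrix (Fin p) (Fin q) ℤ)
    (hA : ZeroOne A) :
    coverNum (A ⊗ₖ B) ≤ coverNum A * coverNum B := by
  classical
  obtain ⟨f, hrectA, hcovA⟩ := coverNum_exists A
  obtain ⟨g, hrectB, hcovB⟩ := coverNum_exists B
  set e := (finProdFinEquiv : Fin (coverNum A) × Fin (coverNum B) ≃ Fin (coverNum A * coverNum B))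
  refine coverNum_le
    (fun t => {x : (Fin n × Fin p) × (Fin m × Fin q) |
      (x.1.1, x.2.1) ∈ f (e.symm t).1 ∧ (x.1.2, x.2.2) ∈ g (e.symm t).2}) ?_ ?_
  · intro t
    obtain ⟨⟨R, C, hRC⟩, honesA⟩ := hrectA (e.symm t).1
    obtain ⟨⟨R', C', hRC'⟩, honesB⟩ := hrectB (e.symm t).2
    constructor
    · refine ⟨R ×ˢ R', C ×ˢ C', ?_⟩
      ext ⟨⟨i, p'⟩, ⟨j, q'⟩⟩
      simp only [Set.mem_setOf_eq, hRC, hRC', Set.mem_prod]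
      tauto
    · rintro ⟨⟨i, p'⟩, ⟨j, q'⟩⟩ ⟨h1, h2⟩
      have hA1 := honesA _ h1
      have hB1 := honesB _ h2
      simp only [Matrix.kroneckerMap_apply]
      simp only at hA1 hB1
      rw [hA1, hB1, mul_one]
  · ext ⟨⟨i, p'⟩, ⟨j, q'⟩⟩
    simp only [Set.mem_iUnion, Set.mem_setOf_eq, onesOf, Matrix.kroneckerMap_apply]
    constructor
    · rintro ⟨t, h1, h2⟩
      have hA1 : (i, j) ∈ onesOf A := hcovA ▸ Set.mem_iUnion.2 ⟨_, h1⟩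
      have hB1 : (p', q') ∈ onesOf B := hcovB ▸ Set.mem_iUnion.2 ⟨_, h2⟩
      simp only [onesOf, Set.mem_setOf_eq] at hA1 hB1
      rw [hA1, hB1, mul_one]
    · intro h
      obtain ⟨hA1, hB1⟩ := zo_mul_eq_one (hA i j) h
      have h1 : (i, j) ∈ ⋃ s, f s := by rw [hcovA]; exact hA1
      have h2 : (p', q') ∈ ⋃ s, g s := by rw [hcovB]; exact hB1
      obtain ⟨s, hs⟩ := Set.mem_iUnion.1 h1
      obtain ⟨u, hu⟩ := Set.mem_iUnion.1 h2
      exact ⟨e (s, u), by simpa using ⟨hs, hu⟩⟩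

lemma coverNum_reindex_le {α β γ δ : Type*} [Fintype α] [Fintype β]
    (M : Matrix α β ℤ) (e₁ : α ≃ γ) (e₂ : β ≃ δ) :
    coverNum (Matrix.reindex e₁ e₂ M) ≤ coverNum M := by
  obtain ⟨f, hrect, hcov⟩ := coverNum_exists M
  refine coverNum_le (fun t => Prod.map e₁ e₂ '' (f t)) ?_ ?_
  · intro t
    obtain ⟨⟨R, C, hRC⟩, hones⟩ := hrect t
    constructor
    · refine ⟨e₁ '' R, e₂ '' C, ?_⟩
      ext ⟨x1, x2⟩
      simp only [Set.mem_image, hRC, Set.mem_prod, Prod.map, Prod.exists]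
      constructor
      · rintro ⟨i, j, ⟨hi, hj⟩, hx⟩
        simp only [Prod.mk.injEq] at hx
        exact ⟨⟨i, hi, hx.1⟩, ⟨j, hj, hx.2⟩⟩
      · rintro ⟨⟨i, hi, hx1⟩, ⟨j, hj, hx2⟩⟩
        exact ⟨i, j, ⟨hi, hj⟩, by simp [hx1, hx2]⟩
    · rintro ⟨x1, x2⟩ ⟨⟨i, j⟩, hij, hx⟩
      simp only [Prod.map, Prod.mk.injEq] at hx
      have := hones _ hij
      simp only [Matrix.reindex_apply, Matrix.submatrix_apply, ← hx.1, ← hx.2,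
        Equiv.symm_apply_apply]
      exact this
  · ext ⟨x1, x2⟩
    simp only [Set.mem_iUnion, Set.mem_image, onesOf, Set.mem_setOf_eq,
      Matrix.reindex_apply, Matrix.submatrix_apply, Prod.exists]
    constructor
    · rintro ⟨t, i, j, hij, hx⟩
      have : (i, j) ∈ onesOf M := hcov ▸ Set.mem_iUnion.2 ⟨_, hij⟩
      simp only [onesOf, Set.mem_setOf_eq] at this
      simp only [Prod.map, Prod.mk.injEq] at hx
      rw [← hx.1, ← hx.2]
      simpa using this
    · intro h
      have : (e₁.symm x1, e₂.symm x2) ∈ ⋃ t, f t := by rw [hcov]; exact h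
      obtain ⟨t, ht⟩ := Set.mem_iUnion.1 this
      exact ⟨t, e₁.symm x1, e₂.symm x2, ht, by simp [Prod.map]⟩

lemma kron_comm_reindex {n m p q : ℕ} (A : Matrix (Fin n) (Fin m) ℤ)
    (B : Matrix (Fin p) (Fin q) ℤ) :
    B ⊗ₖ A = Matrix.reindex (Equiv.prodComm (Fin n) (Fin p)) (Equiv.prodComm (Fin m) (Fin q))
      (A ⊗ₖ B) := by
  ext ⟨i, j⟩ ⟨k, l⟩
  simp [Matrix.reindex_apply, Matrix.submatrix_apply, mul_comm]

end Aux

open Kronecker in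
/-- For `0,1` matrices `A` and `B`, the Boolean rank of the Kronecker product
satisfies `Rbool(A ⊗ B) ≤ Rbool(A) · Rbool(B)` and
`Rbool(A ⊗ B) ≥ max {i(A) · Rbool(B), Rbool(A) · i(B)}`. -/
theorem boolRank_kronecker_bounds {n m p q : ℕ}
    (A : Matrix (Fin n) (Fin m) ℤ) (B : Matrix (Fin p) (Fin q) ℤ)
    (hA : ZeroOne A) (hB : ZeroOne B) :
    coverNum (A ⊗ₖ B) ≤ coverNum A * coverNum B ∧
    isolNum A * coverNum B ≤ coverNum (A ⊗ₖ B) ∧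
    coverNum A * isolNum B ≤ coverNum (A ⊗ₖ B) := by
  refine ⟨upper_bound A B hA, key_lower A B hA hB, ?_⟩
  calc coverNum A * isolNum B = isolNum B * coverNum A := mul_comm _ _
    _ ≤ coverNum (B ⊗ₖ A) := key_lower B A hB hA
    _ = coverNum (Matrix.reindex (Equiv.prodComm (Fin n) (Fin p))
        (Equiv.prodComm (Fin m) (Fin q)) (A ⊗ₖ B)) := by rw [kron_comm_reindex]
    _ ≤ coverNum (A ⊗ₖ B) := coverNum_reindex_le _ _ _
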